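/- Let A, B ∈ SGL_n(F₂) with B − A = Σᵢ₌₁^r xᵢxᵢᵀ for linearly independent x₁,…,x_r ∈ F₂ⁿ, where 2 ≤ r ≤ n and the matrix [xᵢᵀ A⁻¹ xⱼ]_{i,j=1}^r has rank one and trace zero. Then the distance between A and B in the graph Γ_n is at least r+2. -/

import Mathlib

open Matrix

/-- The graph `Γ_n` on invertible symmetric `n×n` matrices over `F₂`, with an edge between
`A` and `B` iff `rank (A - B) = 1`. -/
def Gamma (n : ℕ) :
    SimpleGraph {A : Matrix (Fin n) (Fin n) (ZMod 2) // A.IsSymm ∧ IsUnit A} where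
  Adj A B := (A.1 - B.1).rank = 1
  symm := by
    constructor
    intro A B h
    beta_reduce at h ⊢
    have e : B.1 - A.1 = A.1 - B.1 := by
      ext i j
      simp only [Matrix.sub_apply]
      exact (by decide : ∀ a b : ZMod 2, a - b = b - a) _ _
    rw [e]; exact h
  loopless := by
    constructor
    intro A h
    simp only [sub_self, Matrix.rank_zero] at h
    exact absurd h (by norm_num)


abbrev F2 := ZMod 2

lemma F2.sq (a : F2) : a * a = a := by revert a; decide
lemma F2.add_self (a : F2) : a + a = 0 := by revert a; decide
lemma F2.one_of_ne_zero {a : F2} (h : a ≠ 0) : a = 1 := by revert a; decide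

namespace GammaAux

variable {n : ℕ}

lemma mulVec_vecMulVec (w v y : Fin n → F2) :
    (vecMulVec w v) *ᵥ y = (v ⬝ᵥ y) • w := by
  ext i
  simp only [vecMulVec, mulVec, dotProduct, of_apply, Pi.smul_apply, smul_eq_mul,
    Finset.sum_mul]
  exact Finset.sum_congr rfl fun j _ => by ring

lemma range_vecMulVec {w : Fin n → F2} (hw : w ≠ 0) :
    LinearMap.range (vecMulVec w w).mulVecLin = Submodule.span F2 {w} := by
  apply le_antisymm
  · rintro _ ⟨y, rfl⟩
    rw [mulVecLin_apply, mulVec_vecMulVec]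
    exact Submodule.smul_mem _ _ (Submodule.mem_span_singleton_self w)
  · rw [Submodule.span_singleton_le_iff_mem]
    obtain ⟨i, hi⟩ : ∃ i, w i ≠ 0 := by
      by_contra h
      push_neg at h
      exact hw (funext fun i => h i)
    refine ⟨Pi.single i 1, ?_⟩
    rw [mulVecLin_apply, mulVec_vecMulVec]
    rw [dotProduct_single, mul_one, F2.one_of_ne_zero hi, one_smul]

lemma rank_vecMulVec_self {w : Fin n → F2} (hw : w ≠ 0) :
    (vecMulVec w w).rank = 1 := by
  rw [Matrix.rank, range_vecMulVec hw]
  exact finrank_span_singleton hw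

lemma neg_mat (M : Matrix (Fin n) (Fin n) F2) : -M = M := by
  ext i j
  exact (by revert M; intro M; generalize M i j = a; revert a; decide : -(M i j) = M i j)

lemma vecMulVec_symm (w : Fin n → F2) : (vecMulVec w w).IsSymm := by
  ext i j
  simp [vecMulVec, Matrix.IsSymm, transpose_apply, mul_comm]

lemma dot_symm {D : Matrix (Fin n) (Fin n) F2} (hD : D.IsSymm) (a b : Fin n → F2) :
    a ⬝ᵥ D *ᵥ b = b ⬝ᵥ D *ᵥ a := by
  have hD' : Dᵀ = D := hD
  rw [dotProduct_mulVec, ← mulVec_transpose, hD', dotProduct_comm]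

lemma triple_prod (z : Fin n → F2) (D : Matrix (Fin n) (Fin n) F2) :
    vecMulVec z z * D * vecMulVec z z = (z ⬝ᵥ D *ᵥ z) • vecMulVec z z := by
  ext i j
  trans (∑ l, ∑ k, (z l * (D l k * z k)) * (z i * z j))
  · simp only [Matrix.mul_apply, vecMulVec, of_apply]
    rw [Finset.sum_comm]
    refine Finset.sum_congr rfl fun l _ => ?_
    rw [Finset.sum_mul]
    refine Finset.sum_congr rfl fun k _ => by ring
  · simp only [Matrix.smul_apply, smul_eq_mul, dotProduct, mulVec, vecMulVec, of_apply]
    rw [Finset.sum_mul]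
    refine Finset.sum_congr rfl fun l _ => ?_
    rw [Finset.mul_sum, Finset.sum_mul]

lemma dot_DPD (z a b : Fin n → F2) (D : Matrix (Fin n) (Fin n) F2) :
    a ⬝ᵥ (D * vecMulVec z z * D) *ᵥ b = (a ⬝ᵥ D *ᵥ z) * (z ⬝ᵥ D *ᵥ b) := by
  rw [← mulVec_mulVec, ← mulVec_mulVec, mulVec_vecMulVec]
  rw [mulVec_smul, dotProduct_smul, smul_eq_mul]
  ring

def Good : ℕ → (ℕ → ℕ → F2) → Prop
  | 0, _ => True
  | (m+1), g => g 0 0 = 0 ∧ Good m (fun i j => g (i+1) (j+1) + g 0 (i+1) * g 0 (j+1))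

lemma Good_congr : ∀ (m : ℕ) (g g' : ℕ → ℕ → F2),
    (∀ i j, i < m → j < m → g i j = g' i j) → Good m g → Good m g' := by
  intro m
  induction m with
  | zero => intro g g' _ _; trivial
  | succ m ih =>
    intro g g' hagree hg
    obtain ⟨h0, hrec⟩ := hg
    refine ⟨by rw [← hagree 0 0 (Nat.succ_pos m) (Nat.succ_pos m)]; exact h0, ?_⟩
    refine ih _ _ ?_ hrec
    intro i j hi hj
    rw [hagree (i+1) (j+1) (by omega) (by omega), hagree 0 (i+1) (by omega) (by omega),
      hagree 0 (j+1) (by omega) (by omega)]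

/-- the bordered pattern: last index has diagonal value `c`, off values `φ`. -/
def pat (m : ℕ) (φ : ℕ → F2) (c : F2) : ℕ → ℕ → F2 := fun a b =>
  if a = m ∧ b = m then c else if b = m then φ a else if a = m then φ b else 0

lemma Good_pat : ∀ (m : ℕ) (φ : ℕ → F2) (c : F2),
    c + (∑ s ∈ Finset.range m, φ s * φ s) = 0 → Good (m+1) (pat m φ c) := by
  intro m
  induction m with
  | zero =>
    intro φ c hc
    simp only [Finset.range_zero, Finset.sum_empty, add_zero] at hc
    exact ⟨by simp [pat, hc], trivial⟩
  | succ m ih =>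
    intro φ c hc
    constructor
    · simp [pat]
    · refine Good_congr _ (pat m (fun s => φ (s+1)) (c + φ 0 * φ 0)) _ ?_ (ih _ _ ?_)
      · intro i j hi hj
        have e0 : (0:ℕ) ≠ m + 1 := by omega
        by_cases hi' : i = m <;> by_cases hj' : j = m
        · simp [pat, hi', hj', e0]
        · simp [pat, hi', hj', e0, show ¬(j+1 = m+1) from by omega]
        · simp [pat, hi', hj', e0, show ¬(i+1 = m+1) from by omega]
        · simp [pat, hi', hj', e0, show ¬(i+1 = m+1) from by omega,
            show ¬(j+1 = m+1) from by omega]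
      · rw [Finset.sum_range_succ' (fun s => φ s * φ s) m] at hc
        linear_combination hc

lemma mat_add_self (M : Matrix (Fin n) (Fin n) F2) : M + M = 0 := by
  ext i j
  exact (by generalize M i j = a; revert a; decide : M i j + M i j = 0)

lemma walk_of_good : ∀ (m : ℕ) (g : ℕ → ℕ → F2) (z : ℕ → (Fin n → F2))
    (S D T : Matrix (Fin n) (Fin n) F2) (hS : S.IsSymm ∧ IsUnit S),
    S * D = 1 → D * S = 1 → D.IsSymm →
    (∀ i, i < m → z i ≠ 0) →
    (∀ i j, i < m → j < m → z i ⬝ᵥ D *ᵥ z j = g i j) →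
    Good m g →
    T = S + ∑ i ∈ Finset.range m, vecMulVec (z i) (z i) →
    ∃ (hTv : T.IsSymm ∧ IsUnit T), (Gamma n).Reachable ⟨S, hS⟩ ⟨T, hTv⟩ := by
  intro m
  induction m with
  | zero =>
    intro g z S D T hS _ _ _ _ _ _ hT
    simp only [Finset.range_zero, Finset.sum_empty, add_zero] at hT
    subst hT
    exact ⟨hS, SimpleGraph.Reachable.refl _⟩
  | succ m ih =>
    intro g z S D T hS hSD hDS hDsym hz hg hGood hT
    set P := vecMulVec (z 0) (z 0) with hP
    have h00 : z 0 ⬝ᵥ D *ᵥ z 0 = 0 := by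
      rw [hg 0 0 (by omega) (by omega)]; exact hGood.1
    have hPsym : P.IsSymm := vecMulVec_symm _
    have hPDP : P * D * P = 0 := by
      rw [hP, triple_prod, h00, zero_smul]
    have hS'sym : (S + P).IsSymm := hS.1.add hPsym
    have hS'D' : (S + P) * (D + D * P * D) = 1 := by
      have expand : (S + P) * (D + D * P * D) =
          S * D + S * D * P * D + P * D + P * D * P * D := by noncomm_ring
      rw [expand, hSD, hPDP, one_mul, Matrix.zero_mul]
      rw [show (1 : Matrix (Fin n) (Fin n) F2) + P * D + P * D + 0 =
        1 + (P * D + P * D) from by abel, mat_add_self, add_zero]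
    have hD'S' : (D + D * P * D) * (S + P) = 1 := by
      have expand : (D + D * P * D) * (S + P) =
          D * S + D * P + D * P * D * S + D * P * D * P := by noncomm_ring
      have e2 : D * P * D * P = D * (P * D * P) := by noncomm_ring
      rw [expand, hDS, e2, hPDP, Matrix.mul_zero]
      have e3 : D * P * D * S = D * P := by
        rw [Matrix.mul_assoc (D * P) D S, hDS, Matrix.mul_one]
      rw [e3]
      rw [show (1 : Matrix (Fin n) (Fin n) F2) + D * P + D * P + 0 =
        1 + (D * P + D * P) from by abel, mat_add_self, add_zero]
    have hS'unit : IsUnit (S + P) := ⟨⟨S + P, D + D * P * D, hS'D', hD'S'⟩, rfl⟩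
    have hD'sym : (D + D * P * D).IsSymm := by
      refine hDsym.add ?_
      show (D * P * D)ᵀ = D * P * D
      rw [Matrix.transpose_mul, Matrix.transpose_mul]
      rw [(hDsym : Dᵀ = D), (hPsym : Pᵀ = P)]
      noncomm_ring
    have hadj : (Gamma n).Adj ⟨S, hS⟩ ⟨S + P, hS'sym, hS'unit⟩ := by
      show (S - (S + P)).rank = 1
      rw [sub_add_cancel_left, neg_mat]
      exact rank_vecMulVec_self (hz 0 (by omega))
    have hT' : T = (S + P) + ∑ i ∈ Finset.range m, vecMulVec (z (i+1)) (z (i+1)) := by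
      rw [hT, Finset.sum_range_succ' (fun i => vecMulVec (z i) (z i)) m]
      abel
    obtain ⟨hTv, reach⟩ := ih (fun i j => g (i+1) (j+1) + g 0 (i+1) * g 0 (j+1))
      (fun i => z (i+1)) (S + P) (D + D * P * D) T ⟨hS'sym, hS'unit⟩ hS'D' hD'S' hD'sym
      (fun i hi => hz (i+1) (by omega))
      (fun i j hi hj => by
        rw [Matrix.add_mulVec, dotProduct_add]
        rw [hg (i+1) (j+1) (by omega) (by omega)]
        rw [dot_DPD]
        rw [dot_symm hDsym (z (i+1)) (z 0)]
        rw [hg 0 (i+1) (by omega) (by omega), hg 0 (j+1) (by omega) (by omega)])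
      hGood.2 hT'
    exact ⟨hTv, hadj.reachable.trans reach⟩

lemma exists_vec_of_rank_one {M : Matrix (Fin m) (Fin m) F2} (hs : M.IsSymm)
    (h : M.rank = 1) : ∃ v, v ≠ 0 ∧ M = vecMulVec v v := by
  have h1 : Module.finrank F2 ↥(LinearMap.range M.mulVecLin) = 1 := h
  obtain ⟨a, ha0, hall⟩ := (finrank_eq_one_iff').mp h1
  set v : Fin m → F2 := (a : Fin m → F2) with hv
  have hv0 : v ≠ 0 := by
    intro hz
    exact ha0 (Subtype.ext hz)
  have hcol : ∀ j, ∃ c : F2, ∀ i, c * v i = M i j := by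
    intro j
    have hmem : (fun i => M i j) ∈ LinearMap.range M.mulVecLin := by
      refine ⟨Pi.single j 1, ?_⟩
      ext i
      simp [mulVecLin_apply, mulVec, dotProduct_single]
    obtain ⟨c, hc⟩ := hall ⟨_, hmem⟩
    have hc' := congrArg Subtype.val hc
    refine ⟨c, fun i => ?_⟩
    have := congrFun hc' i
    simpa using this
  choose b hb using hcol
  have hM : ∀ i j, M i j = v i * b j := fun i j => by
    rw [← hb j i]; ring
  have hMne : ∃ j, b j ≠ 0 := by
    by_contra hz
    push_neg at hz
    have : M = 0 := by
      ext i j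
      rw [hM i j, hz j, mul_zero]; rfl
    rw [this, rank_zero] at h
    exact one_ne_zero h.symm
  obtain ⟨j₀, hj₀⟩ := hMne
  have hbj : b j₀ = 1 := F2.one_of_ne_zero hj₀
  have hsym : ∀ i j, v i * b j = v j * b i := by
    intro i j
    rw [← hM i j, ← hM j i]
    have := congrFun (congrFun hs i) j
    simpa [Matrix.IsSymm, transpose_apply] using this.symm
  have hvb : ∀ i, v i = b i * v j₀ := by
    intro i
    have := hsym i j₀
    rw [hbj, mul_one] at this
    rw [this]; ring
  have hvj : v j₀ ≠ 0 := by
    intro hz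
    apply hv0
    funext i
    rw [hvb i, hz, mul_zero]; rfl
  have hvj1 : v j₀ = 1 := F2.one_of_ne_zero hvj
  have hbv : b = v := by
    funext i
    rw [hvb i, hvj1, mul_one]
  refine ⟨v, hv0, ?_⟩
  ext i j
  rw [hM i j, ← hbv]
  rfl

lemma exists_dotProduct_eq {m : ℕ} {x : Fin m → Fin n → F2}
    (h : LinearIndependent F2 x) (b : Fin m → F2) : ∃ y, ∀ i, x i ⬝ᵥ y = b i := by
  have hM : LinearIndependent F2 (Matrix.of x) := h
  have hrank : (Matrix.of x).rank = m := by
    simpa using hM.rank_matrix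
  have htop : LinearMap.range (Matrix.of x).mulVecLin = ⊤ := by
    apply Submodule.eq_top_of_finrank_eq
    rw [show Module.finrank F2 ↥(LinearMap.range (Matrix.of x).mulVecLin) = (Matrix.of x).rank from rfl,
      hrank]
    simp [Module.finrank_fintype_fun_eq_card]
  have : b ∈ LinearMap.range (Matrix.of x).mulVecLin := htop ▸ Submodule.mem_top
  obtain ⟨y, hy⟩ := this
  exact ⟨y, fun i => congrFun hy i⟩


lemma sub_to_add (M N : Matrix (Fin n) (Fin n) F2) : M - N = M + N := by
  ext i j
  simp only [Matrix.sub_apply, Matrix.add_apply]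
  generalize M i j = a; generalize N i j = b
  revert a b; decide

lemma sum_mulVec {ι : Type*} (s : Finset ι) (f : ι → Matrix (Fin n) (Fin n) F2)
    (y : Fin n → F2) : (∑ i ∈ s, f i) *ᵥ y = ∑ i ∈ s, (f i) *ᵥ y := by
  classical
  induction s using Finset.induction_on with
  | empty => simp
  | insert _ _ hns ih =>
    rename_i a s
    rw [Finset.sum_insert hns, Finset.sum_insert hns, Matrix.add_mulVec, ih]

lemma finsum_dotProduct {ι : Type*} (s : Finset ι) (f : ι → Fin n → F2) (y : Fin n → F2) :
    (∑ i ∈ s, f i) ⬝ᵥ y = ∑ i ∈ s, f i ⬝ᵥ y := by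
  classical
  induction s using Finset.induction_on with
  | empty => simp
  | insert _ _ hns ih =>
    rename_i a s
    rw [Finset.sum_insert hns, Finset.sum_insert hns, add_dotProduct, ih]

lemma dotProduct_finsum {ι : Type*} (s : Finset ι) (y : Fin n → F2) (f : ι → Fin n → F2) :
    y ⬝ᵥ (∑ i ∈ s, f i) = ∑ i ∈ s, y ⬝ᵥ f i := by
  classical
  induction s using Finset.induction_on with
  | empty => simp
  | insert _ _ hns ih =>
    rename_i a s
    rw [Finset.sum_insert hns, Finset.sum_insert hns, dotProduct_add, ih]

lemma mulVec_finsum {ι : Type*} (s : Finset ι) (C : Matrix (Fin n) (Fin n) F2)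
    (f : ι → Fin n → F2) : C *ᵥ (∑ i ∈ s, f i) = ∑ i ∈ s, C *ᵥ f i := by
  classical
  induction s using Finset.induction_on with
  | empty => simp
  | insert _ _ hns ih =>
    rename_i a s
    rw [Finset.sum_insert hns, Finset.sum_insert hns, Matrix.mulVec_add, ih]

lemma bilin_expand {m : ℕ} (C : Matrix (Fin n) (Fin n) F2) (f : Fin m → Fin n → F2)
    (c d : Fin m → F2) :
    (∑ a, c a • f a) ⬝ᵥ C *ᵥ (∑ b, d b • f b) =
      ∑ a, ∑ b, c a * d b * (f a ⬝ᵥ C *ᵥ f b) := by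
  rw [finsum_dotProduct]
  refine Finset.sum_congr rfl fun a _ => ?_
  rw [smul_dotProduct, mulVec_finsum, dotProduct_finsum, Finset.smul_sum]
  refine Finset.sum_congr rfl fun b _ => ?_
  rw [Matrix.mulVec_smul, dotProduct_smul, smul_eq_mul, smul_eq_mul]
  ring

lemma F2_unit_eq_one {a : F2} (h : IsUnit a) : a = 1 :=
  F2.one_of_ne_zero (isUnit_iff_ne_zero.mp h)

lemma one_add_eq_one {t : F2} (h : (1 : F2) + t = 1) : t = 0 := by
  revert h; revert t; decide

set_option maxHeartbeats 1000000 in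
lemma no_short_walk {r : ℕ}
    (A B : {M : Matrix (Fin n) (Fin n) (ZMod 2) // M.IsSymm ∧ IsUnit M})
    (x : Fin r → Fin n → F2) (hli : LinearIndependent F2 x)
    (hB : B.1 - A.1 = ∑ i, vecMulVec (x i) (x i))
    (u : Fin r → F2) (hu0 : u ≠ 0)
    (hG : ∀ i j, x i ⬝ᵥ (A.1)⁻¹ *ᵥ x j = u i * u j)
    (p : (Gamma n).Walk A B) (hlen : p.length ≤ r + 1) : False := by
  classical
  set C := (A.1)⁻¹ with hC
  have hdet : IsUnit A.1.det := (Matrix.isUnit_iff_isUnit_det _).mp A.2.2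
  have hAC : A.1 * C = 1 := Matrix.mul_nonsing_inv _ hdet
  set k := p.length with hk
  set S : ℕ → Matrix (Fin n) (Fin n) F2 := fun i => (p.getVert i).1 with hS
  have hS0 : S 0 = A.1 := by simp [hS, SimpleGraph.Walk.getVert_zero]
  have hSk : S k = B.1 := by simp [hS, hk, SimpleGraph.Walk.getVert_length]
  have hSsym : ∀ i, (S i).IsSymm := fun i => (p.getVert i).2.1
  have hSunit : ∀ i, IsUnit (S i) := fun i => (p.getVert i).2.2
  have hadj : ∀ i, i < k → ((S i) - (S (i+1))).rank = 1 := fun i hi =>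
    p.adj_getVert_succ hi
  have hw : ∀ i : Fin k, ∃ wv : Fin n → F2, wv ≠ 0 ∧ S i.1 - S (i.1+1) = vecMulVec wv wv := by
    rintro ⟨i, hi⟩
    obtain ⟨v, hv0, hvE⟩ := exists_vec_of_rank_one ((hSsym i).sub (hSsym (i+1))) (hadj i hi)
    exact ⟨v, hv0, hvE⟩
  choose wf hwf0 hwfE using hw
  set w : ℕ → Fin n → F2 := fun j => if h : j < k then wf ⟨j, h⟩ else 0 with hwdef
  have hw0 : ∀ j, j < k → w j ≠ 0 := by
    intro j hj
    rw [hwdef]; simp only [dif_pos hj]; exact hwf0 _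
  have hwE : ∀ j, j < k → S j - S (j+1) = vecMulVec (w j) (w j) := by
    intro j hj
    rw [hwdef]; simp only [dif_pos hj]; exact hwfE ⟨j, hj⟩
  have hstep : ∀ j, j < k → S (j+1) = S j + vecMulVec (w j) (w j) := by
    intro j hj
    have h2 := hwE j hj
    rw [sub_to_add] at h2
    calc S (j+1) = S j + (S j + S (j+1)) := by
          rw [← add_assoc, mat_add_self, zero_add]
      _ = S j + vecMulVec (w j) (w j) := by rw [← h2]
  have htel : ∀ i, i ≤ k → S i = A.1 + ∑ j ∈ Finset.range i, vecMulVec (w j) (w j) := by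
    intro i
    induction i with
    | zero => intro _; simp [hS0]
    | succ i ih =>
      intro hik
      rw [hstep i (by omega), ih (by omega), Finset.sum_range_succ, add_assoc]
  have hsum : ∑ j ∈ Finset.range k, vecMulVec (w j) (w j) = ∑ i, vecMulVec (x i) (x i) := by
    have h1 := htel k le_rfl
    rw [hSk] at h1
    rw [← hB, h1]; abel
  set wF : Fin k → Fin n → F2 := fun j => w j.1 with hwF
  have hxspan : ∀ a, x a ∈ Submodule.span F2 (Set.range wF) := by
    intro a
    obtain ⟨y, hy⟩ := exists_dotProduct_eq hli (Pi.single a 1)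
    have hMy : (∑ i, vecMulVec (x i) (x i)) *ᵥ y = x a := by
      rw [sum_mulVec]
      rw [Finset.sum_congr rfl (fun i _ => by rw [mulVec_vecMulVec, hy i])]
      simp [Pi.single_apply]
    rw [← hMy, ← hsum, sum_mulVec]
    apply Submodule.sum_mem
    intro j hj
    rw [mulVec_vecMulVec]
    apply Submodule.smul_mem
    exact Submodule.subset_span ⟨⟨j, Finset.mem_range.mp hj⟩, rfl⟩
  have hwspan : ∀ j, j < k → w j ∈ Submodule.span F2 (Set.range x) := by
    intro j hj
    have hUP : Submodule.span F2 (Set.range x) ≤ Submodule.span F2 (Set.range wF) :=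
      Submodule.span_le.mpr (by rintro _ ⟨a, rfl⟩; exact hxspan a)
    have hfU : Module.finrank F2 ↥(Submodule.span F2 (Set.range x)) = r := by
      rw [finrank_span_eq_card hli, Fintype.card_fin]
    have hfP : Module.finrank F2 ↥(Submodule.span F2 (Set.range wF)) ≤ k := by
      have := finrank_range_le_card (R := F2) wF
      rw [Set.finrank] at this
      simpa using this
    have hrle : r ≤ Module.finrank F2 ↥(Submodule.span F2 (Set.range wF)) := by
      rw [← hfU]
      exact Submodule.finrank_mono hUP
    rcases eq_or_lt_of_le hrle with heq | hlt
    · have hEQ : Submodule.span F2 (Set.range x) = Submodule.span F2 (Set.range wF) := by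
        apply Submodule.eq_of_le_of_finrank_le hUP
        omega
      rw [hEQ]
      exact Submodule.subset_span ⟨⟨j, hj⟩, rfl⟩
    · exfalso
      have hkr : k = r + 1 := by omega
      have hwli : LinearIndependent F2 wF := by
        rw [linearIndependent_iff_card_eq_finrank_span]
        rw [Set.finrank, Fintype.card_fin]
        omega
      have hker : ∀ y : Fin n → F2, (∀ i, x i ⬝ᵥ y = 0) → (∀ j' : Fin k, wF j' ⬝ᵥ y = 0) := by
        intro y hy
        have hMy : (∑ i, vecMulVec (x i) (x i)) *ᵥ y = 0 := by
          rw [sum_mulVec]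
          rw [Finset.sum_congr rfl (fun i _ => by rw [mulVec_vecMulVec, hy i])]
          simp
        rw [← hsum, sum_mulVec] at hMy
        have hMy2 : ∑ j' : Fin k, (wF j' ⬝ᵥ y) • wF j' = 0 := by
          rw [← hMy, ← Fin.sum_univ_eq_sum_range (fun j' => vecMulVec (w j') (w j') *ᵥ y) k]
          exact Finset.sum_congr rfl (fun j' _ => by rw [mulVec_vecMulVec])
        exact Fintype.linearIndependent_iff.mp hwli _ hMy2
      set f : (Fin n → F2) →ₗ[F2] (Fin r → F2) := (Matrix.of x).mulVecLin with hf
      set gmap : (Fin n → F2) →ₗ[F2] (Fin k → F2) := (Matrix.of wF).mulVecLin with hg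
      have hfsurj : LinearMap.range f = ⊤ := by
        rw [LinearMap.range_eq_top]
        intro b
        obtain ⟨y, hy⟩ := exists_dotProduct_eq hli b
        exact ⟨y, funext fun i => hy i⟩
      have hgsurj : LinearMap.range gmap = ⊤ := by
        rw [LinearMap.range_eq_top]
        intro b
        obtain ⟨y, hy⟩ := exists_dotProduct_eq hwli b
        exact ⟨y, funext fun i => hy i⟩
      have hkerle : LinearMap.ker f ≤ LinearMap.ker gmap := by
        intro y hy
        rw [LinearMap.mem_ker] at hy ⊢
        have hy' : ∀ i, x i ⬝ᵥ y = 0 := fun i => congrFun hy i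
        funext j'
        exact hker y hy' j'
      have hrk1 := LinearMap.finrank_range_add_finrank_ker f
      have hrk2 := LinearMap.finrank_range_add_finrank_ker gmap
      rw [hfsurj] at hrk1
      rw [hgsurj] at hrk2
      rw [finrank_top, Module.finrank_fintype_fun_eq_card, Fintype.card_fin,
        Module.finrank_fintype_fun_eq_card, Fintype.card_fin] at hrk1 hrk2
      have hmono := Submodule.finrank_mono hkerle
      have hnk : k ≤ n := by
        have h1 : Module.finrank F2 ↥(Submodule.span F2 (Set.range wF)) ≤
            Module.finrank F2 (Fin n → F2) := Submodule.finrank_le _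
        rw [Module.finrank_fintype_fun_eq_card, Fintype.card_fin] at h1
        omega
      omega
  have hq : ∀ j : Fin k, ∃ q : Fin r → F2, ∑ a, q a • x a = w j.1 :=
    fun j => (Submodule.mem_span_range_iff_exists_fun F2).mp (hwspan j.1 j.2)
  choose q hqE using hq
  set v : ℕ → F2 := fun j => if h : j < k then ∑ a, q ⟨j, h⟩ a * u a else 0 with hv
  have hgram : ∀ j l : Fin k, w j.1 ⬝ᵥ C *ᵥ w l.1 = v j.1 * v l.1 := by
    intro j l
    rw [← hqE j, ← hqE l, bilin_expand, hv]
    simp only [dif_pos j.2, dif_pos l.2, Fin.eta]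
    rw [Finset.sum_mul_sum]
    refine Finset.sum_congr rfl fun a _ => Finset.sum_congr rfl fun b _ => ?_
    rw [hG a b]
    ring
  have hdetS : ∀ i, i ≤ k → ∑ j ∈ Finset.range i, v j = 0 := by
    intro i hik
    set Wt : Matrix (Fin k) (Fin n) F2 :=
      Matrix.of (fun (j : Fin k) (l : Fin n) => if j.1 < i then w j.1 l else 0) with hWtdef
    have hWt : Wtᵀ * Wt = ∑ j ∈ Finset.range i, vecMulVec (w j) (w j) := by
      ext a b
      rw [Matrix.mul_apply, Matrix.sum_apply]
      simp only [Matrix.transpose_apply, hWtdef, Matrix.of_apply]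
      rw [Finset.sum_congr rfl (fun j (_ : j ∈ Finset.univ) => by
        split_ifs with hj
        · rfl
        · rw [mul_zero] :
        ∀ j ∈ Finset.univ, (if (j:Fin k).1 < i then w (j:Fin k).1 a else 0) *
          (if (j:Fin k).1 < i then w (j:Fin k).1 b else 0)
          = if (j:Fin k).1 < i then w (j:Fin k).1 a * w (j:Fin k).1 b else 0)]
      rw [Fin.sum_univ_eq_sum_range (fun j => if j < i then w j a * w j b else 0) k]
      rw [← Finset.sum_subset (Finset.range_subset_range.mpr hik)
        (fun j _ hj => if_neg (fun hcon => hj (Finset.mem_range.mpr (by omega))))]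
      refine Finset.sum_congr rfl fun j hj => ?_
      rw [if_pos (Finset.mem_range.mp hj), vecMulVec_apply]
    have hSi : S i = A.1 * (1 + C * (Wtᵀ * Wt)) := by
      rw [Matrix.mul_add, Matrix.mul_one, ← Matrix.mul_assoc, hAC, Matrix.one_mul,
        hWt, ← htel i hik]
    set vt : Fin k → F2 := fun j => if j.1 < i then v j.1 else 0 with hvt
    have hH : Wt * (C * Wtᵀ) = vecMulVec vt vt := by
      ext a b
      rw [vecMulVec_apply]
      simp only [Matrix.mul_apply, Matrix.transpose_apply, hWtdef, Matrix.of_apply, hvt]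
      by_cases ha : a.1 < i
      · by_cases hb : b.1 < i
        · simp only [if_pos ha, if_pos hb]
          have := hgram a b
          simpa [dotProduct, Matrix.mulVec] using this
        · simp [if_pos ha, if_neg hb]
      · simp [if_neg ha]
    have hdet1 : (S i).det = 1 := F2_unit_eq_one ((Matrix.isUnit_iff_isUnit_det _).mp (hSunit i))
    have hdetA : A.1.det = 1 := F2_unit_eq_one hdet
    have hc : (1 : F2) + vt ⬝ᵥ vt = 1 := by
      have e1 : (S i).det = A.1.det * (1 + C * (Wtᵀ * Wt)).det := by
        rw [hSi, Matrix.det_mul]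
      have e2 : (1 + C * (Wtᵀ * Wt)).det = (1 + Wt * (C * Wtᵀ)).det := by
        rw [← Matrix.mul_assoc C, Matrix.det_one_add_mul_comm]
      have e3 : (1 + Wt * (C * Wtᵀ)).det = 1 + vt ⬝ᵥ vt := by
        rw [hH, Matrix.vecMulVec_eq (Fin 1), Matrix.det_one_add_replicateCol_mul_replicateRow]
      rw [e1, e2, e3, hdetA, one_mul] at hdet1
      exact hdet1
    have hvt0 : vt ⬝ᵥ vt = 0 := one_add_eq_one hc
    have hfinal : ∑ j ∈ Finset.range i, v j = vt ⬝ᵥ vt := by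
      rw [dotProduct]
      have c1 : ∀ j : Fin k, vt j * vt j = (fun (t : ℕ) => if t < i then v t else 0) j.1 := by
        intro j
        simp only [hvt]
        split_ifs with h
        · exact F2.sq _
        · rw [mul_zero]
      rw [Finset.sum_congr rfl (fun j _ => c1 j)]
      rw [Fin.sum_univ_eq_sum_range (fun t => if t < i then v t else 0) k]
      rw [← Finset.sum_subset (Finset.range_subset_range.mpr hik)
        (fun j _ hj => if_neg (fun hcon => hj (Finset.mem_range.mpr (by omega))))]
      exact (Finset.sum_congr rfl fun j hj => (if_pos (Finset.mem_range.mp hj)).symm)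
    rw [hfinal, hvt0]
  have hv0 : ∀ j, j < k → v j = 0 := by
    intro j hj
    have h1 := hdetS (j+1) (by omega)
    have h2 := hdetS j (by omega)
    rw [Finset.sum_range_succ, h2, zero_add] at h1
    exact h1
  obtain ⟨a, ha⟩ := Function.ne_iff.mp hu0
  have hua : u a = 1 := F2.one_of_ne_zero (by simpa using ha)
  obtain ⟨c, hcc⟩ := (Submodule.mem_span_range_iff_exists_fun F2).mp (hxspan a)
  have hxa : x a ⬝ᵥ C *ᵥ x a = 1 := by rw [hG a a, hua, one_mul]
  have hzero : x a ⬝ᵥ C *ᵥ x a = 0 := by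
    rw [← hcc, bilin_expand]
    refine Finset.sum_eq_zero fun j _ => Finset.sum_eq_zero fun l _ => ?_
    rw [show wF j ⬝ᵥ C *ᵥ wF l = v j.1 * v l.1 from hgram j l, hv0 j.1 j.2, zero_mul, mul_zero]
  exact one_ne_zero (hxa.symm.trans hzero)

lemma Good_succ {m : ℕ} {g : ℕ → ℕ → F2} (h0 : g 0 0 = 0)
    (h1 : Good m (fun i j => g (i+1) (j+1) + g 0 (i+1) * g 0 (j+1))) : Good (m+1) g :=
  ⟨h0, h1⟩

lemma reach_aux {r : ℕ} (hr1 : 1 ≤ r)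
    (A B : {M : Matrix (Fin n) (Fin n) (ZMod 2) // M.IsSymm ∧ IsUnit M})
    (xp : Fin r → Fin n → F2) (hxp0 : ∀ i, xp i ≠ 0)
    (hBsum : B.1 = A.1 + ∑ i, vecMulVec (xp i) (xp i))
    (y : Fin n → F2) (hy0 : y ≠ 0)
    (Φ : ℕ → F2) (c : F2)
    (hq : y ⬝ᵥ (A.1)⁻¹ *ᵥ y = 0)
    (hcond : c + ∑ s ∈ Finset.range (r-1), Φ s * Φ s = 0)
    (hpat : ∀ (s t : Fin r), (xp s ⬝ᵥ (A.1)⁻¹ *ᵥ xp t) +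
      (xp s ⬝ᵥ (A.1)⁻¹ *ᵥ y) * (xp t ⬝ᵥ (A.1)⁻¹ *ᵥ y) = pat (r-1) Φ c s.1 t.1) :
    (Gamma n).Reachable A B := by
  classical
  set C := (A.1)⁻¹ with hC
  have hdet : IsUnit A.1.det := (Matrix.isUnit_iff_isUnit_det _).mp A.2.2
  have hAC : A.1 * C = 1 := Matrix.mul_nonsing_inv _ hdet
  have hCA : C * A.1 = 1 := Matrix.nonsing_inv_mul _ hdet
  have hCsym : C.IsSymm := by
    show Cᵀ = C
    rw [hC, Matrix.transpose_nonsing_inv, (A.2.1 : (A.1)ᵀ = A.1)]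
  set ζ : ℕ → (Fin n → F2) :=
    fun t => if t = 0 then y else (if h : t - 1 < r then xp ⟨t-1, h⟩ else 0) with hζ
  set g : ℕ → ℕ → F2 := fun a b => ζ a ⬝ᵥ C *ᵥ ζ b with hg
  have hζ0 : ζ 0 = y := by simp [hζ]
  have hζs : ∀ (s : ℕ) (hs : s < r), ζ (s+1) = xp ⟨s, hs⟩ := by
    intro s hs
    simp [hζ, hs]
  have hGood : Good (r+1) g := by
    apply Good_succ
    · exact hq
    · have hr' : r - 1 + 1 = r := by omega
      apply Good_congr (r) (pat (r-1) Φ c)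
      · intro s t hs ht
        change pat (r-1) Φ c s t =
          ζ (s+1) ⬝ᵥ C *ᵥ ζ (t+1) + (ζ 0 ⬝ᵥ C *ᵥ ζ (s+1)) * (ζ 0 ⬝ᵥ C *ᵥ ζ (t+1))
        rw [hζ0, hζs s hs, hζs t ht, dot_symm hCsym y (xp ⟨s, hs⟩),
          dot_symm hCsym y (xp ⟨t, ht⟩)]
        exact (hpat ⟨s, hs⟩ ⟨t, ht⟩).symm
      · rw [← hr']
        exact Good_pat (r-1) Φ c hcond
  have hz : ∀ t, t < r + 1 → ζ t ≠ 0 := by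
    intro t ht
    rcases Nat.eq_zero_or_pos t with rfl | hpos
    · rw [hζ0]; exact hy0
    · have hs : t - 1 < r := by omega
      have : ζ t = xp ⟨t-1, hs⟩ := by
        have := hζs (t-1) hs
        rwa [Nat.sub_add_cancel hpos] at this
      rw [this]; exact hxp0 _
  obtain ⟨hTv, reach⟩ := walk_of_good (r+1) g ζ A.1 C
    (A.1 + ∑ t ∈ Finset.range (r+1), vecMulVec (ζ t) (ζ t)) A.2 hAC hCA hCsym hz
    (fun i j _ _ => rfl) hGood rfl
  have hT : A.1 + ∑ t ∈ Finset.range (r+1), vecMulVec (ζ t) (ζ t) =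
      B.1 + vecMulVec y y := by
    rw [Finset.sum_range_succ' (fun t => vecMulVec (ζ t) (ζ t)) r, hζ0]
    have : ∑ t ∈ Finset.range r, vecMulVec (ζ (t+1)) (ζ (t+1)) =
        ∑ i : Fin r, vecMulVec (xp i) (xp i) := by
      rw [← Fin.sum_univ_eq_sum_range (fun t => vecMulVec (ζ (t+1)) (ζ (t+1))) r]
      exact Finset.sum_congr rfl fun i _ => by rw [hζs i.1 i.2]
    rw [this, hBsum]
    abel
  have hadj : (Gamma n).Adj ⟨_, hTv⟩ B := by
    show ((A.1 + ∑ t ∈ Finset.range (r+1), vecMulVec (ζ t) (ζ t)) - B.1).rank = 1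
    rw [hT, add_sub_cancel_left]
    exact rank_vecMulVec_self hy0
  exact reach.trans hadj.reachable

lemma both_one {a b : F2} (h : a * b ≠ 0) : a = 1 ∧ b = 1 := by
  revert h; revert a b; decide

set_option maxHeartbeats 1000000 in
lemma reachable_main {r : ℕ} (hr2 : 2 ≤ r)
    (A B : {M : Matrix (Fin n) (Fin n) (ZMod 2) // M.IsSymm ∧ IsUnit M})
    (x : Fin r → Fin n → F2) (hli : LinearIndependent F2 x)
    (hB : B.1 - A.1 = ∑ i, vecMulVec (x i) (x i))
    (u : Fin r → F2) (hu0 : u ≠ 0)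
    (hG : ∀ i j, x i ⬝ᵥ (A.1)⁻¹ *ᵥ x j = u i * u j)
    (htru : ∑ i, u i = 0) :
    (Gamma n).Reachable A B := by
  classical
  set C := (A.1)⁻¹ with hC
  have hdet : IsUnit A.1.det := (Matrix.isUnit_iff_isUnit_det _).mp A.2.2
  have hAC : A.1 * C = 1 := Matrix.mul_nonsing_inv _ hdet
  have hCsym : C.IsSymm := by
    show Cᵀ = C
    rw [hC, Matrix.transpose_nonsing_inv, (A.2.1 : (A.1)ᵀ = A.1)]
  have hBsum : B.1 = A.1 + ∑ i, vecMulVec (x i) (x i) := by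
    rw [← hB]; abel
  have hφsurj : ∀ b : Fin r → F2, ∃ y, ∀ i, x i ⬝ᵥ C *ᵥ y = b i := by
    intro b
    have hker : LinearMap.ker C.mulVecLin = ⊥ := by
      rw [LinearMap.ker_eq_bot']
      intro m hm
      have h2 : A.1 *ᵥ (C *ᵥ m) = 0 := by
        rw [show C *ᵥ m = 0 from hm, Matrix.mulVec_zero]
      rwa [Matrix.mulVec_mulVec, hAC, Matrix.one_mulVec] at h2
    have hli' : LinearIndependent F2 (fun i => C *ᵥ x i) := hli.map' C.mulVecLin hker
    obtain ⟨y, hy⟩ := exists_dotProduct_eq hli' b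
    refine ⟨y, fun i => ?_⟩
    rw [dot_symm hCsym (x i) y, dotProduct_comm]
    exact hy i
  set q : (Fin n → F2) → F2 := fun y => y ⬝ᵥ C *ᵥ y with hqdef
  have hqadd : ∀ y z, q (y + z) = q y + q z := by
    intro y z
    show (y + z) ⬝ᵥ C *ᵥ (y + z) = y ⬝ᵥ C *ᵥ y + z ⬝ᵥ C *ᵥ z
    rw [Matrix.mulVec_add, dotProduct_add, add_dotProduct, add_dotProduct]
    rw [dot_symm hCsym z y]
    linear_combination F2.add_self (y ⬝ᵥ C *ᵥ z)
  have hqsmul : ∀ (c : F2) y, q (c • y) = c * q y := by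
    intro c y
    show (c • y) ⬝ᵥ C *ᵥ (c • y) = c * (y ⬝ᵥ C *ᵥ y)
    rw [Matrix.mulVec_smul, dotProduct_smul, smul_dotProduct, smul_eq_mul, smul_eq_mul,
      ← mul_assoc, F2.sq]
  have hqzero : q 0 = 0 := by
    show (0 : Fin n → F2) ⬝ᵥ C *ᵥ 0 = 0
    rw [zero_dotProduct]
  have hqsum : ∀ (s : Finset (Fin r)) (f : Fin r → Fin n → F2),
      q (∑ i ∈ s, f i) = ∑ i ∈ s, q (f i) := by
    intro s f
    induction s using Finset.induction_on with
    | empty => simpa using hqzero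
    | insert _ _ hns ih =>
      rename_i a s
      rw [Finset.sum_insert hns, Finset.sum_insert hns, hqadd, ih]
  have hkey : ∃ (y : Fin n → F2) (β : Fin r → F2), (∀ i, x i ⬝ᵥ C *ᵥ y = β i) ∧ q y = 0 ∧
      (β = u ∨ ∃ j : Fin r, u j = 1 ∧ β = fun i => u i + (Pi.single j 1 : Fin r → F2) i) := by
    by_cases hA : ∃ y, (∀ i, x i ⬝ᵥ C *ᵥ y = u i) ∧ q y = 0
    · obtain ⟨y, h1, h2⟩ := hA
      exact ⟨y, u, h1, h2, Or.inl rfl⟩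
    · push_neg at hA
      obtain ⟨y0, hy0⟩ := hφsurj u
      have hqy0 : q y0 = 1 := by
        by_contra hq1
        exact (hA y0 hy0) (by revert hq1; generalize q y0 = a; revert a; decide)
      choose yb hybE using fun i => hφsurj (Pi.single i 1)
      set cv : Fin r → F2 := fun i => q (yb i) with hcv
      have hkerq : ∀ z, (∀ i, x i ⬝ᵥ C *ᵥ z = 0) → q z = 0 := by
        intro z hz
        by_contra hq1
        have hqz : q z = 1 := by revert hq1; generalize q z = a; revert a; decide
        refine (hA (y0 + z) ?_) ?_
        · intro i
          rw [Matrix.mulVec_add, dotProduct_add, hy0 i, hz i, add_zero]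
        · rw [hqadd, hqy0, hqz]; decide
      have hrep : ∀ y, q y = ∑ i, (x i ⬝ᵥ C *ᵥ y) * cv i := by
        intro y
        set z := y + ∑ i, (x i ⬝ᵥ C *ᵥ y) • yb i with hz
        have hzker : ∀ i, x i ⬝ᵥ C *ᵥ z = 0 := by
          intro i
          rw [hz, Matrix.mulVec_add, dotProduct_add, mulVec_finsum, dotProduct_finsum]
          have hterm : ∀ k : Fin r, x i ⬝ᵥ C *ᵥ ((x k ⬝ᵥ C *ᵥ y) • yb k)
              = if i = k then x k ⬝ᵥ C *ᵥ y else 0 := by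
            intro k
            rw [Matrix.mulVec_smul, dotProduct_smul, hybE k i, smul_eq_mul, Pi.single_apply,
              mul_ite, mul_one, mul_zero]
          rw [Finset.sum_congr rfl (fun k _ => hterm k)]
          rw [Finset.sum_ite_eq Finset.univ i (fun k => x k ⬝ᵥ C *ᵥ y),
            if_pos (Finset.mem_univ i)]
          exact F2.add_self _
        have hqz : q z = 0 := hkerq z hzker
        have hexp : q z = q y + ∑ i, (x i ⬝ᵥ C *ᵥ y) * cv i := by
          rw [hz, hqadd, hqsum]
          congr 1
          exact Finset.sum_congr rfl fun i _ => hqsmul _ _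
        have h0 : q y + (∑ i, (x i ⬝ᵥ C *ᵥ y) * cv i) = 0 := by rw [← hexp, hqz]
        calc q y = q y + ((∑ i, (x i ⬝ᵥ C *ᵥ y) * cv i) +
              (∑ i, (x i ⬝ᵥ C *ᵥ y) * cv i)) := by rw [F2.add_self, add_zero]
          _ = (q y + (∑ i, (x i ⬝ᵥ C *ᵥ y) * cv i)) +
              (∑ i, (x i ⬝ᵥ C *ᵥ y) * cv i) := by ring
          _ = ∑ i, (x i ⬝ᵥ C *ᵥ y) * cv i := by rw [h0, zero_add]
      have hcu : ∑ i, u i * cv i = 1 := by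
        calc ∑ i, u i * cv i
            = ∑ i, (x i ⬝ᵥ C *ᵥ y0) * cv i :=
              Finset.sum_congr rfl (fun i _ => by rw [hy0 i])
          _ = q y0 := (hrep y0).symm
          _ = 1 := hqy0
      have hex : ∃ j ∈ Finset.univ, u j * cv j ≠ 0 := by
        apply Finset.exists_ne_zero_of_sum_ne_zero
        rw [hcu]; exact one_ne_zero
      obtain ⟨j, _, hj⟩ := hex
      obtain ⟨hj1, hcj⟩ := both_one hj
      obtain ⟨y, hyE⟩ := hφsurj (fun i => u i + (Pi.single j 1 : Fin r → F2) i)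
      refine ⟨y, _, hyE, ?_, Or.inr ⟨j, hj1, rfl⟩⟩
      rw [hrep y]
      have : ∀ i, (x i ⬝ᵥ C *ᵥ y) * cv i = u i * cv i + (if i = j then cv i else 0) := by
        intro i
        rw [hyE i, Pi.single_apply, add_mul, ite_mul, one_mul, zero_mul]
      rw [Finset.sum_congr rfl (fun i _ => this i), Finset.sum_add_distrib]
      rw [Finset.sum_ite_eq' Finset.univ j cv, if_pos (Finset.mem_univ j), hcu, hcj]
      decide
  obtain ⟨y, β, hyβ, hqy, hcase⟩ := hkey
  rcases hcase with hβu | ⟨j, hj1, hβj⟩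
  · -- case A : β = u
    obtain ⟨a, ha⟩ := Function.ne_iff.mp hu0
    have ha' : u a ≠ 0 := by simpa using ha
    have hy0 : y ≠ 0 := by
      intro h
      apply ha'
      rw [← hβu, ← hyβ a, h, Matrix.mulVec_zero, dotProduct_zero]
    refine reach_aux (by omega) A B x (fun i => hli.ne_zero i) hBsum y hy0
      (fun _ => 0) 0 hqy (by simp) ?_
    intro s t
    rw [hG s t, hyβ s, hyβ t, hβu, F2.add_self]
    simp [pat]
  · -- case B
    set L : Fin r := ⟨r - 1, by omega⟩ with hL
    set σ : Equiv.Perm (Fin r) := Equiv.swap j L with hσ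
    have hσL : σ L = j := Equiv.swap_apply_right j L
    have hσeq : ∀ a : Fin r, σ a = j ↔ a = L := by
      intro a
      rw [← hσL]
      exact σ.apply_eq_iff_eq
    have hβ : ∀ i, x i ⬝ᵥ C *ᵥ y = u i + (if i = j then 1 else 0) := by
      intro i
      simp only [hyβ i, hβj, Pi.single_apply]
    -- y ≠ 0
    have hsum_erase : ∑ i ∈ Finset.univ.erase j, u i = 1 := by
      have h1 := Finset.add_sum_erase Finset.univ u (Finset.mem_univ j)
      rw [htru] at h1
      have := F2.add_self (u j)
      calc ∑ i ∈ Finset.univ.erase j, u i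
          = (u j + u j) + ∑ i ∈ Finset.univ.erase j, u i := by rw [this, zero_add]
        _ = u j + (u j + ∑ i ∈ Finset.univ.erase j, u i) := by ring
        _ = u j := by rw [h1, add_zero]
        _ = 1 := hj1
    have hex2 : ∃ a ∈ Finset.univ.erase j, u a ≠ 0 := by
      apply Finset.exists_ne_zero_of_sum_ne_zero
      rw [hsum_erase]; exact one_ne_zero
    obtain ⟨a, haj, hua⟩ := hex2
    have haj' : a ≠ j := Finset.ne_of_mem_erase haj
    have hy0 : y ≠ 0 := by
      intro h
      have h2 := hβ a
      rw [h, Matrix.mulVec_zero, dotProduct_zero, if_neg haj'] at h2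
      rw [add_zero] at h2
      exact hua h2.symm
    -- Φ and conditions
    set Φ : ℕ → F2 := fun s => if h : s < r then u (σ ⟨s, h⟩) else 0 with hΦ
    have hΦfin : ∀ i : Fin r, Φ i.1 = u (σ i) := by
      intro i
      simp only [hΦ, dif_pos i.2, Fin.eta]
    have hΦlast : Φ (r-1) = 1 := by
      have : Φ (r-1) = u (σ L) := hΦfin L
      rw [this, hσL, hj1]
    have hsr : ∑ s ∈ Finset.range r, Φ s = 0 := by
      rw [← Fin.sum_univ_eq_sum_range Φ r]
      rw [Finset.sum_congr rfl (fun i _ => hΦfin i), Equiv.sum_comp σ u, htru]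
    have hs1 : ∑ s ∈ Finset.range (r-1), Φ s = 1 := by
      have h1 : ∑ s ∈ Finset.range ((r-1)+1), Φ s = 0 := by
        rw [show r - 1 + 1 = r from by omega]; exact hsr
      rw [Finset.sum_range_succ, hΦlast] at h1
      calc ∑ s ∈ Finset.range (r-1), Φ s
          = (∑ s ∈ Finset.range (r-1), Φ s + 1) + 1 := by
            rw [add_assoc, F2.add_self 1, add_zero]
        _ = 0 + 1 := by rw [h1]
        _ = 1 := by rw [zero_add]
    have hcond : (1:F2) + ∑ s ∈ Finset.range (r-1), Φ s * Φ s = 0 := by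
      rw [Finset.sum_congr rfl (fun s _ => F2.sq (Φ s)), hs1]
      decide
    have hBsum' : B.1 = A.1 + ∑ i, vecMulVec (x (σ i)) (x (σ i)) := by
      rw [hBsum]
      congr 1
      exact (Equiv.sum_comp σ (fun a => vecMulVec (x a) (x a))).symm
    refine reach_aux (by omega) A B (fun i => x (σ i)) (fun i => hli.ne_zero (σ i)) hBsum' y hy0
      Φ 1 hqy hcond ?_
    intro s t
    rw [hG (σ s) (σ t), hβ (σ s), hβ (σ t)]
    have hfneq : ∀ b : Fin r, b ≠ L → b.1 ≠ r - 1 := by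
      intro b hbL hcon
      exact hbL (Fin.ext hcon)
    by_cases hs : s = L <;> by_cases ht : t = L
    · subst hs; subst ht
      rw [if_pos ((hσeq L).mpr rfl), hσL, hj1]
      refine Eq.trans (by decide : (1:F2)*1 + ((1:F2)+1)*((1:F2)+1) = 1) ?_
      simp [pat, show (L:Fin r).1 = r-1 from rfl]
    · subst hs
      rw [if_pos ((hσeq L).mpr rfl), if_neg ((hσeq t).not.mpr ht), hσL, hj1]
      have he : ∀ e : F2, 1 * e + (1+1)*(e+0) = e := by decide
      refine Eq.trans (he _) ?_
      simp [pat, hfneq t ht, hΦfin, show (L:Fin r).1 = r-1 from rfl]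
    · subst ht
      rw [if_neg ((hσeq s).not.mpr hs), if_pos ((hσeq L).mpr rfl), hσL, hj1]
      have he : ∀ e : F2, e * 1 + (e+0)*(1+1) = e := by decide
      refine Eq.trans (he _) ?_
      simp [pat, hfneq s hs, hΦfin, show (L:Fin r).1 = r-1 from rfl]
    · rw [if_neg ((hσeq s).not.mpr hs), if_neg ((hσeq t).not.mpr ht)]
      have he : ∀ e e' : F2, e * e' + (e+0)*(e'+0) = 0 := by decide
      refine Eq.trans (he _ _) ?_
      simp [pat, hfneq s hs, hfneq t ht]

end GammaAux
/-- If `B − A = ∑ xᵢxᵢᵀ` with `2 ≤ r ≤ n`, the `xᵢ` linearly independent, and the matrix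
`[xᵢᵀ A⁻¹ xⱼ]` of rank one and trace zero, then `d(A,B) ≥ r + 2` in `Γ_n`. -/
theorem dist_ge_of_gram_rank_one_trace_zero {n r : ℕ} (hr2 : 2 ≤ r) (hrn : r ≤ n)
    (A B : {A : Matrix (Fin n) (Fin n) (ZMod 2) // A.IsSymm ∧ IsUnit A})
    (x : Fin r → Fin n → ZMod 2) (hli : LinearIndependent (ZMod 2) x)
    (hB : B.1 - A.1 = ∑ i, vecMulVec (x i) (x i))
    (hrank : (Matrix.of fun i j : Fin r => x i ⬝ᵥ (A.1)⁻¹ *ᵥ x j).rank = 1)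
    (htr : (Matrix.of fun i j : Fin r => x i ⬝ᵥ (A.1)⁻¹ *ᵥ x j).trace = 0) :
    r + 2 ≤ (Gamma n).dist A B := by
  classical
  have hdet : IsUnit A.1.det := (Matrix.isUnit_iff_isUnit_det _).mp A.2.2
  have hCsym : ((A.1)⁻¹).IsSymm := by
    show ((A.1)⁻¹)ᵀ = (A.1)⁻¹
    rw [Matrix.transpose_nonsing_inv, (A.2.1 : (A.1)ᵀ = A.1)]
  have hGsym : (Matrix.of fun i j : Fin r => x i ⬝ᵥ (A.1)⁻¹ *ᵥ x j).IsSymm := by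
    show (Matrix.of fun i j : Fin r => x i ⬝ᵥ (A.1)⁻¹ *ᵥ x j)ᵀ = _
    ext i j
    show x j ⬝ᵥ (A.1)⁻¹ *ᵥ x i = x i ⬝ᵥ (A.1)⁻¹ *ᵥ x j
    exact GammaAux.dot_symm hCsym (x j) (x i)
  obtain ⟨u, hu0, hGuu⟩ := GammaAux.exists_vec_of_rank_one hGsym hrank
  have hG : ∀ i j, x i ⬝ᵥ (A.1)⁻¹ *ᵥ x j = u i * u j := by
    intro i j
    have := congrFun (congrFun hGuu i) j
    simpa [Matrix.vecMulVec_apply] using this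
  have htru : ∑ i, u i = 0 := by
    have htr2 : ∑ i, x i ⬝ᵥ (A.1)⁻¹ *ᵥ x i = 0 := by
      simpa [Matrix.trace, Matrix.diag] using htr
    calc ∑ i, u i = ∑ i, u i * u i := by
          exact Finset.sum_congr rfl fun i _ => (F2.sq (u i)).symm
      _ = ∑ i, x i ⬝ᵥ (A.1)⁻¹ *ᵥ x i := Finset.sum_congr rfl fun i _ => (hG i i).symm
      _ = 0 := htr2
  have hreach := GammaAux.reachable_main hr2 A B x hli hB u hu0 hG htru
  by_contra hcon
  push_neg at hcon
  obtain ⟨p, hp⟩ := hreach.exists_walk_length_eq_dist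
  exact GammaAux.no_short_walk A B x hli hB u hu0 hG p (by omega)
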